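/- Let ℓ = ℓ1 ℓ2 be a factorization of a Lyndon word ℓ with ℓ1 and ℓ2 both Lyndon, and suppose ℓ2 is not equal to the longest proper Lyndon suffix ℓ^r of ℓ. Then |ℓ1| > 1, and writing the costandard factorization ℓ1 = u v (so u = ℓ1^l and v = ℓ1^r), the word v ℓ2 is Lyndon; thus ℓ = u v ℓ2 with u, v, uv and vℓ2 all Lyndon. -/

import Mathlib

/- Words over a linearly ordered alphabet `I` are lists, compared by the
lexicographic order of Lean's `LinearOrder (List I)` instance, in which a word
is smaller than any word of which it is a proper prefix. -/

variable {I : Type*} [LinearOrder I]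

/-- A nonempty word is *Lyndon* if it is lexicographically smaller than
every proper nonempty suffix of itself. -/
def IsLyndon (w : List I) : Prop :=
  w ≠ [] ∧ ∀ i, 0 < i → i < w.length → w < w.drop i

/-- `r` is the longest proper suffix of `l` that is Lyndon
(the right factor `l^r` of the costandard factorization). -/
def LongestLyndonSuffix (l r : List I) : Prop :=
  r <:+ l ∧ r.length < l.length ∧ IsLyndon r ∧
    ∀ r', r' <:+ l → r'.length < l.length → IsLyndon r' → r'.length ≤ r.length

/-- `p` is the longest proper prefix of `l` that is Lyndon
(the left factor `l^{ls}` of the standard factorization). -/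
def LongestLyndonPrefix (l p : List I) : Prop :=
  p <+: l ∧ p.length < l.length ∧ IsLyndon p ∧
    ∀ p', p' <+: l → p'.length < l.length → IsLyndon p' → p'.length ≤ p.length

/-- `fs` is the canonical factorization of `w`: a nonempty, lexicographically
nonincreasing list of Lyndon words whose concatenation is `w`. -/
def IsCanonicalFactorization (w : List I) (fs : List (List I)) : Prop :=
  w = fs.flatten ∧ fs ≠ [] ∧ (∀ f ∈ fs, IsLyndon f) ∧ fs.Chain' (· ≥ ·)

set_option linter.unusedSectionVars false

lemma list_lt_iff_lex {x y : List I} : x < y ↔ List.Lex (· < ·) x y := Iff.rfl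

lemma lt_append_right (x : List I) {t : List I} (ht : t ≠ []) : x < x ++ t := by
  rw [list_lt_iff_lex]
  induction x with
  | nil =>
    cases t with
    | nil => exact absurd rfl ht
    | cons a t => exact List.Lex.nil
  | cons a x ih => exact List.Lex.cons ih

lemma lt_of_prefix_ne {x y : List I} (h : x <+: y) (hne : x ≠ y) : x < y := by
  obtain ⟨t, rfl⟩ := h
  refine lt_append_right x fun h => hne ?_
  simp [h]

lemma append_lt_append_left_iff (x : List I) {a b : List I} : x ++ a < x ++ b ↔ a < b := by
  rw [list_lt_iff_lex, list_lt_iff_lex]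
  induction x with
  | nil => simp
  | cons c x ih => simpa [List.lex_cons_iff] using ih

lemma lex_cons_ne {a b : I} (hab : a ≠ b) {x y : List I} : (a :: x) < (b :: y) ↔ a < b := by
  rw [list_lt_iff_lex]
  constructor
  · intro h
    cases h with
    | rel h => exact h
    | cons h => exact absurd rfl hab
  · exact fun h => List.Lex.rel h

lemma append_lt_append_iff {x y : List I} (hxy : ¬ x <+: y) (hyx : ¬ y <+: x) (a b : List I) :
    x ++ a < y ++ b ↔ x < y := by
  induction x generalizing y with
  | nil => exact absurd (List.nil_prefix) hxy
  | cons c x ih =>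
    cases y with
    | nil => exact absurd (List.nil_prefix) hyx
    | cons d y =>
      rcases eq_or_ne c d with rfl | hcd
      · have h1 : ¬ x <+: y := fun h => hxy (List.cons_prefix_cons.2 ⟨rfl, h⟩)
        have h2 : ¬ y <+: x := fun h => hyx (List.cons_prefix_cons.2 ⟨rfl, h⟩)
        have e1 : (c :: x) ++ a < (c :: y) ++ b ↔ x ++ a < y ++ b := by
          rw [List.cons_append, List.cons_append, list_lt_iff_lex, list_lt_iff_lex,
            List.lex_cons_iff]
        have e2 : (c : I) :: x < c :: y ↔ x < y := by
          rw [list_lt_iff_lex, list_lt_iff_lex, List.lex_cons_iff]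
        rw [e1, e2, ih h1 h2]
      · rw [List.cons_append, List.cons_append, lex_cons_ne hcd, lex_cons_ne hcd]

lemma IsLyndon.lt_suffix {w s : List I} (h : IsLyndon w) (hs : s <:+ w) (hne : s ≠ [])
    (hlen : s.length < w.length) : w < s := by
  obtain ⟨t, rfl⟩ := hs
  have ht : t ≠ [] := by
    intro h0; rw [h0] at hlen; simp at hlen
  have ht0 : 0 < t.length := List.length_pos_iff.2 ht
  have hs0 : 0 < s.length := List.length_pos_iff.2 hne
  have h3 := h.2 t.length ht0 (by simp; omega)
  rwa [List.drop_left] at h3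

lemma isLyndon_of_suffix_lt {w : List I} (hw : w ≠ [])
    (h : ∀ s, s <:+ w → s ≠ [] → s.length < w.length → w < s) : IsLyndon w := by
  refine ⟨hw, fun i hi hilen => ?_⟩
  refine h _ (List.drop_suffix i w) ?_ ?_
  · rw [Ne, List.drop_eq_nil_iff]; omega
  · rw [List.length_drop]; omega

lemma suffix_eq_drop {s l : List I} (h : s <:+ l) : s = l.drop (l.length - s.length) := by
  obtain ⟨t, rfl⟩ := h
  simp [List.drop_left]

lemma suffix_append_right_cancel {w x y : List I} (h : w ++ y <:+ x ++ y) : w <:+ x := by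
  rw [← List.reverse_prefix] at h ⊢
  simpa [List.prefix_append_right_inj] using h

lemma IsLyndon.not_border {w b : List I} (h : IsLyndon w) (hp : b <+: w) (hs : b <:+ w)
    (hb : b ≠ []) (hlen : b.length < w.length) : False := by
  have h1 : w < b := h.lt_suffix hs hb hlen
  have h2 : b < w := lt_of_prefix_ne hp (fun e => by rw [e] at hlen; exact lt_irrefl _ hlen)
  exact absurd h1 (asymm h2)

lemma LongestLyndonSuffix.le_suffix {l v : List I} (h : LongestLyndonSuffix l v) :
    ∀ s, s <:+ l → s ≠ [] → s.length < l.length → v ≤ s := by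
  obtain ⟨hvs, hvlen, hvL, hmax⟩ := h
  have hl2 : 1 < l.length := lt_of_le_of_lt (List.length_pos_iff.2 hvL.1) hvlen
  obtain ⟨i₀, hi₀, hmin⟩ := Finset.exists_min_image (Finset.Ioo 0 l.length)
    (fun i => l.drop i) ⟨1, by simp [hl2]⟩
  rw [Finset.mem_Ioo] at hi₀
  set m : List I := l.drop i₀ with hm
  have hms : m <:+ l := List.drop_suffix i₀ l
  have hmne : m ≠ [] := by rw [hm, Ne, List.drop_eq_nil_iff]; omega
  have hmlen : m.length < l.length := by rw [hm, List.length_drop]; omega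
  have hminle : ∀ s : List I, s <:+ l → s ≠ [] → s.length < l.length → m ≤ s := by
    intro s hs hsne hslen
    rw [suffix_eq_drop hs]
    refine hmin _ ?_
    rw [Finset.mem_Ioo]
    have := List.length_pos_iff.2 hsne
    omega
  have hmL : IsLyndon m := by
    refine isLyndon_of_suffix_lt hmne fun s hs hsne hslen => ?_
    have hsl : s <:+ l := hs.trans hms
    have : m ≤ s := hminle s hsl hsne (hslen.trans hmlen)
    exact lt_of_le_of_ne this (fun e => by rw [e] at hslen; exact lt_irrefl _ hslen)
  have hle : m.length ≤ v.length := hmax m hms hmlen hmL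
  have hmv : m <:+ v := by
    rcases List.suffix_or_suffix_of_suffix hms hvs with h | h
    · exact h
    · rw [h.eq_of_length_le hle]
  have hvm : v ≤ m := by
    rcases eq_or_ne m v with rfl | hne
    · exact le_rfl
    · exact le_of_lt (hvL.lt_suffix hmv hmne (lt_of_le_of_ne hle (fun e => hne (hmv.eq_of_length e))))
  intro s hs hsne hslen
  exact hvm.trans (hminle s hs hsne hslen)

lemma lt_of_append_lt {x y : List I} (h : x ++ y < y) : x < y := by
  have hy : y ≠ [] := by
    rintro rfl
    exact List.not_lex_nil (list_lt_iff_lex.1 h)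
  by_cases hxy : x <+: y
  · rcases eq_or_ne x y with rfl | hne
    · exact absurd h (asymm (lt_append_right x hy))
    · exact lt_of_prefix_ne hxy hne
  · by_cases hyx : y <+: x
    · obtain ⟨t, rfl⟩ := hyx
      rw [List.append_assoc] at h
      exact absurd h (asymm (lt_append_right y (by simp [hy])))
    · have h' : x ++ y < y ++ [] := by simpa using h
      exact (append_lt_append_iff hxy hyx y []).1 h'

lemma isLyndon_append {x y : List I} (hx : IsLyndon x) (hy : IsLyndon y) (hxy : x < y) :
    IsLyndon (x ++ y) := by
  have hxne := hx.1
  have hyne := hy.1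
  have hyx : ¬ y <+: x := by
    intro hp
    rcases eq_or_ne y x with rfl | hne
    · exact lt_irrefl _ hxy
    · exact absurd hxy (asymm (lt_of_prefix_ne hp hne))
  have hlt : x ++ y < y := by
    by_cases hp : x <+: y
    · obtain ⟨t, rfl⟩ := hp
      have ht : t ≠ [] := by rintro rfl; simp at hxy
      rw [append_lt_append_left_iff]
      exact hy.lt_suffix ⟨x, rfl⟩ ht (by simpa using List.length_pos_iff.2 hxne)
    · have := (append_lt_append_iff hp hyx y []).2 hxy
      simpa using this
  refine isLyndon_of_suffix_lt (by simp [hxne]) fun s hs hsne hslen => ?_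
  by_cases hsy : s.length ≤ y.length
  · have hsuf : s <:+ y := by
      rcases List.suffix_or_suffix_of_suffix hs (⟨x, rfl⟩ : y <:+ x ++ y) with h | h
      · exact h
      · rw [h.eq_of_length_le hsy]
    have : y ≤ s := by
      rcases eq_or_ne s y with rfl | hne
      · exact le_rfl
      · exact le_of_lt (hy.lt_suffix hsuf hsne (lt_of_le_of_ne hsy
          (fun e => hne (hsuf.eq_of_length e))))
    exact lt_of_lt_of_le hlt this
  · push_neg at hsy
    have hys : y <:+ s := by
      rcases List.suffix_or_suffix_of_suffix (⟨x, rfl⟩ : y <:+ x ++ y) hs with h | h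
      · exact h
      · exact absurd h.length_le (by omega)
    obtain ⟨w, rfl⟩ := hys
    have hwne : w ≠ [] := by rintro rfl; simp at hsy
    have hwx : w <:+ x := suffix_append_right_cancel hs
    have hwlen : w.length < x.length := by simp at hslen; omega
    have hnwp : ¬ w <+: x := fun hp => hx.not_border hp hwx hwne hwlen
    have hnxw : ¬ x <+: w := fun hp => absurd hp.length_le (by omega)
    exact (append_lt_append_iff hnxw hnwp y y).2 (hx.lt_suffix hwx hwne hwlen)

lemma left_factor_isLyndon {l u v : List I} (hl : IsLyndon l) (hv : LongestLyndonSuffix l v)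
    (huv : l = u ++ v) : IsLyndon u := by
  have hvne := hv.2.2.1.1
  have hune : u ≠ [] := by
    rintro rfl
    rw [huv] at hv
    simpa using hv.2.1
  refine isLyndon_of_suffix_lt hune fun w hw hwne hwlen => ?_
  have hwvs : w ++ v <:+ l := by
    rw [huv]; obtain ⟨t, rfl⟩ := hw; exact ⟨t, by simp⟩
  have hlwv : u ++ v < w ++ v := by
    rw [← huv]
    exact hl.lt_suffix hwvs (by simp [hvne]) (by rw [huv]; simpa using hwlen)
  by_cases hp : w <+: u
  · obtain ⟨t, rfl⟩ := hp
    have htne : t ≠ [] := by rintro rfl; simp at hwlen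
    rw [List.append_assoc, append_lt_append_left_iff] at hlwv
    have htv : t ++ v <:+ l := by rw [huv]; exact ⟨w, by simp⟩
    have := hv.le_suffix (t ++ v) htv (by simp [hvne])
      (by rw [huv]; simpa using List.length_pos_iff.2 hwne)
    exact absurd hlwv (not_lt.2 this)
  · have hnup : ¬ u <+: w := fun h => absurd h.length_le (by omega)
    exact (append_lt_append_iff hnup hp v v).1 hlwv


/-- If `ℓ = ℓ1 ℓ2` with `ℓ, ℓ1, ℓ2` Lyndon and `ℓ2 ≠ ℓ^r`, then `|ℓ1| > 1` and, writing
the costandard factorization `ℓ1 = u v`, the word `v ℓ2` is Lyndon; thus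
`ℓ = u v ℓ2` with `u`, `v`, `uv` and `vℓ2` all Lyndon. -/
theorem three_way_lyndon (ℓ ℓ1 ℓ2 r : List I)
    (hℓ : IsLyndon ℓ) (h1 : IsLyndon ℓ1) (h2 : IsLyndon ℓ2) (hsplit : ℓ = ℓ1 ++ ℓ2)
    (hr : LongestLyndonSuffix ℓ r) (hne : ℓ2 ≠ r) :
    1 < ℓ1.length ∧
      ∀ u v : List I, ℓ1 = u ++ v → LongestLyndonSuffix ℓ1 v →
        IsLyndon u ∧ IsLyndon v ∧ IsLyndon (u ++ v) ∧ IsLyndon (v ++ ℓ2) := by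
  have h1ne := h1.1
  have h2ne := h2.1
  have h1pos : 0 < ℓ1.length := List.length_pos_iff.2 h1ne
  have h2pos : 0 < ℓ2.length := List.length_pos_iff.2 h2ne
  have hlen : ℓ.length = ℓ1.length + ℓ2.length := by rw [hsplit, List.length_append]
  have h2suf : ℓ2 <:+ ℓ := ⟨ℓ1, hsplit.symm⟩
  have h2lt : ℓ2.length < ℓ.length := by omega
  have h2ler : ℓ2.length ≤ r.length := hr.2.2.2 ℓ2 h2suf h2lt h2
  have h2sufr : ℓ2 <:+ r := by
    rcases List.suffix_or_suffix_of_suffix h2suf hr.1 with h | h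
    · exact h
    · exact absurd (h.eq_of_length_le h2ler) (Ne.symm hne)
  have h2ltr : ℓ2.length < r.length :=
    lt_of_le_of_ne h2ler fun e => hne (h2sufr.eq_of_length e)
  obtain ⟨s, hs⟩ := h2sufr
  have hsne : s ≠ [] := by
    rintro rfl; rw [← hs] at h2ltr; simp at h2ltr
  have hrlen : r.length = s.length + ℓ2.length := by rw [← hs, List.length_append]
  have hslen : s.length < ℓ1.length := by
    have := hr.2.1; omega
  have hssuf : s <:+ ℓ1 := by
    refine suffix_append_right_cancel (y := ℓ2) ?_
    rw [hs, ← hsplit]; exact hr.1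
  refine ⟨by have := List.length_pos_iff.2 hsne; omega, fun u v huv hv => ?_⟩
  have hvL : IsLyndon v := hv.2.2.1
  refine ⟨left_factor_isLyndon h1 hv huv, hvL, huv ▸ h1, ?_⟩
  have hrlt2 : s ++ ℓ2 < ℓ2 := by
    rw [hs]
    exact hr.2.2.1.lt_suffix ⟨s, hs⟩ h2ne h2ltr
  have hslt2 : s < ℓ2 := lt_of_append_lt hrlt2
  have hvles : v ≤ s := hv.le_suffix s hssuf hsne hslen
  exact isLyndon_append hvL h2 (lt_of_le_of_lt hvles hslt2)
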